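/- Let N ≥ 1 and for each i = 1, …, N let a^{(i)} : ℕ → ℝ be a sequence with a^{(i)}_k ≥ 0 for all k and a^{(i)}_0 ≥ 1, and suppose c_i := limsup_{k→∞} (a^{(i)}_k)^{1/k} is finite for every i. Define s_k := Σ_{k_1+⋯+k_N = k} a^{(1)}_{k_1} ⋯ a^{(N)}_{k_N}. Then limsup_{k→∞} s_k^{1/k} = max_{1≤i≤N} c_i. -/

import Mathlib

open Filter

/-- For `x ≥ 0` and `k ≠ 0`, `(x ^ k) ^ (1/k) = x`. -/
private lemma root_pow_aux {x : ℝ} (hx : 0 ≤ x) {k : ℕ} (hk : k ≠ 0) :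
    (x ^ k) ^ (1 / (k : ℝ)) = x := by
  rw [← Real.rpow_natCast x k, ← Real.rpow_mul hx, mul_one_div,
    div_self (by exact_mod_cast hk), Real.rpow_one]

/-- For `x ≥ 0`, `b ≥ 0`, `k ≠ 0`, `x ^ (1/k) ≤ b` implies `x ≤ b ^ k`. -/
private lemma pow_of_root_le {x b : ℝ} (hx : 0 ≤ x) {k : ℕ} (hk : k ≠ 0)
    (h : x ^ (1 / (k : ℝ)) ≤ b) : x ≤ b ^ k := by
  have h2 : (x ^ (1 / (k : ℝ))) ^ k ≤ b ^ k :=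
    pow_le_pow_left₀ (Real.rpow_nonneg hx _) h k
  calc x = (x ^ (1 / (k : ℝ))) ^ k := by
            rw [← Real.rpow_natCast (x ^ (1 / (k : ℝ))) k, ← Real.rpow_mul hx,
              one_div, inv_mul_cancel₀ (by exact_mod_cast hk), Real.rpow_one]
    _ ≤ b ^ k := h2

/-- Let `N ≥ 1` and for each `i` let `a i : ℕ → ℝ` be a nonnegative sequence with
`a i 0 ≥ 1` whose `k`-th root growth rate `c i = limsup (a i k) ^ (1/k)` is finite
(i.e. the sequence of roots is bounded above).  Then the multi-fold Cauchy product
`s k = Σ_{k₁+⋯+k_N = k} a 1 k₁ ⋯ a N k_N` satisfies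
`limsup (s k) ^ (1/k) = max_i c i`. -/
theorem limsup_root_multiCauchyProduct_eq_max
    (N : ℕ) (hN : 0 < N) (a : Fin N → ℕ → ℝ)
    (ha : ∀ i k, 0 ≤ a i k) (ha0 : ∀ i, 1 ≤ a i 0)
    (hbd : ∀ i, IsBoundedUnder (· ≤ ·) atTop (fun k : ℕ => a i k ^ (1 / (k : ℝ)))) :
    limsup (fun k : ℕ =>
        (∑ κ ∈ Finset.Nat.antidiagonalTuple N k, ∏ i, a i (κ i)) ^ (1 / (k : ℝ))) atTop
      = ⨆ i : Fin N, limsup (fun k : ℕ => a i k ^ (1 / (k : ℝ))) atTop := by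
  have hNe : Nonempty (Fin N) := ⟨⟨0, hN⟩⟩
  set c : Fin N → ℝ := fun i => limsup (fun k : ℕ => a i k ^ (1 / (k : ℝ))) atTop with hc
  set s : ℕ → ℝ := fun k => ∑ κ ∈ Finset.Nat.antidiagonalTuple N k, ∏ i, a i (κ i) with hs
  have hs0 : ∀ k, 0 ≤ s k := fun k =>
    Finset.sum_nonneg fun κ _ => Finset.prod_nonneg fun i _ => ha i (κ i)
  have hci0 : ∀ i, 0 ≤ c i := fun i =>
    le_limsup_of_frequently_le
      (Frequently.of_forall fun k => Real.rpow_nonneg (ha i k) _) (hbd i)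
  set C : ℝ := ⨆ i, c i with hCdef
  have hCbdd : BddAbove (Set.range c) := (Set.finite_range c).bddAbove
  have hciC : ∀ i, c i ≤ C := fun i => le_ciSup hCbdd i
  have hC0 : 0 ≤ C := le_trans (hci0 (Classical.arbitrary _)) (hciC (Classical.arbitrary _))
  -- a i k ≤ s k for every i, k
  have hais : ∀ i k, a i k ≤ s k := by
    intro i k
    set κ₀ : Fin N → ℕ := Pi.single i k with hκ₀
    have hmem : κ₀ ∈ Finset.Nat.antidiagonalTuple N k :=
      Finset.Nat.mem_antidiagonalTuple.mpr (by simp [hκ₀])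
    have h1 : a i k ≤ ∏ j, a j (κ₀ j) := by
      have herase : (1 : ℝ) ≤ ∏ j ∈ Finset.univ.erase i, a j (κ₀ j) := by
        have h := Finset.prod_le_prod (s := Finset.univ.erase i)
          (f := fun _ => (1 : ℝ)) (g := fun j => a j (κ₀ j))
          (fun _ _ => zero_le_one) (fun j hj => by
            rw [hκ₀, Pi.single_eq_of_ne (Finset.ne_of_mem_erase hj)]
            exact ha0 j)
        simpa using h
      calc a i k = a i (κ₀ i) * 1 := by rw [hκ₀, Pi.single_eq_same, mul_one]
        _ ≤ a i (κ₀ i) * ∏ j ∈ Finset.univ.erase i, a j (κ₀ j) := by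
            exact mul_le_mul_of_nonneg_left herase (ha i _)
        _ = ∏ j, a j (κ₀ j) :=
            Finset.mul_prod_erase Finset.univ (fun j => a j (κ₀ j)) (Finset.mem_univ i)
    exact h1.trans <| Finset.single_le_sum
      (fun κ _ => Finset.prod_nonneg fun j _ => ha j (κ j)) hmem
  -- key eventual upper bound
  have key : ∀ r : ℝ, C < r → ∀ᶠ k in atTop, s k ^ (1 / (k : ℝ)) ≤ r := by
    intro r hr
    have hr0 : 0 < r := lt_of_le_of_lt hC0 hr
    set b : ℝ := (C + r) / 2 with hbdef
    have hCb : C < b := by rw [hbdef]; linarith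
    have hbr : b < r := by rw [hbdef]; linarith
    have hb0 : 0 < b := lt_of_le_of_lt hC0 hCb
    -- each colour eventually dominated by b^k
    have hEv : ∀ i, ∃ K : ℕ, ∀ k ≥ K, a i k ≤ b ^ k := by
      intro i
      have h1 : ∀ᶠ k : ℕ in atTop, a i k ^ (1 / (k : ℝ)) < b :=
        eventually_lt_of_limsup_lt (lt_of_le_of_lt (hciC i) hCb) (hbd i)
      have h2 : ∀ᶠ k : ℕ in atTop, a i k ≤ b ^ k := by
        filter_upwards [h1, eventually_ge_atTop 1] with k hk hk1
        exact pow_of_root_le (ha i k) (by omega) hk.le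
      exact (eventually_atTop.mp h2)
    choose K hK using hEv
    set M : Fin N → ℝ := fun i => 1 + ∑ k ∈ Finset.range (K i), a i k / b ^ k with hMdef
    have hM1 : ∀ i, 1 ≤ M i := fun i =>
      le_add_of_nonneg_right <| Finset.sum_nonneg fun k _ =>
        div_nonneg (ha i k) (pow_nonneg hb0.le k)
    have hMa : ∀ i k, a i k ≤ M i * b ^ k := by
      intro i k
      rcases lt_or_ge k (K i) with hk | hk
      · have h1 : a i k / b ^ k ≤ M i := by
          refine le_add_of_nonneg_of_le zero_le_one ?_
          exact Finset.single_le_sum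
            (fun j _ => div_nonneg (ha i j) (pow_nonneg hb0.le j))
            (Finset.mem_range.mpr hk)
        calc a i k = a i k / b ^ k * b ^ k := by
              field_simp
          _ ≤ M i * b ^ k := mul_le_mul_of_nonneg_right h1 (pow_nonneg hb0.le k)
      · exact (hK i k hk).trans (le_mul_of_one_le_left (pow_nonneg hb0.le k) (hM1 i))
    set Mt : ℝ := ∏ i, M i with hMtdef
    have hMt1 : 1 ≤ Mt := by
      rw [hMtdef]
      have h := Finset.prod_le_prod (s := Finset.univ)
        (f := fun _ : Fin N => (1 : ℝ)) (g := M)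
        (fun _ _ => zero_le_one) (fun i _ => hM1 i)
      simpa using h
    -- global bound on s
    have hsb : ∀ k, s k ≤ ((k : ℝ) + 1) ^ N * Mt * b ^ k := by
      intro k
      have hterm : ∀ κ ∈ Finset.Nat.antidiagonalTuple N k, ∏ i, a i (κ i) ≤ Mt * b ^ k := by
        intro κ hκ
        have hsum : ∑ i, κ i = k := Finset.Nat.mem_antidiagonalTuple.mp hκ
        calc ∏ i, a i (κ i) ≤ ∏ i, M i * b ^ κ i :=
              Finset.prod_le_prod (fun i _ => ha i (κ i)) (fun i _ => hMa i (κ i))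
          _ = Mt * b ^ (∑ i, κ i) := by
              rw [Finset.prod_mul_distrib, Finset.prod_pow_eq_pow_sum]
          _ = Mt * b ^ k := by rw [hsum]
      have hcard : (Finset.Nat.antidiagonalTuple N k).card ≤ (k + 1) ^ N := by
        have hsub : Finset.Nat.antidiagonalTuple N k ⊆
            Fintype.piFinset fun _ : Fin N => Finset.range (k + 1) := by
          intro κ hκ
          have hsum : ∑ i, κ i = k := Finset.Nat.mem_antidiagonalTuple.mp hκ
          refine Fintype.mem_piFinset.mpr fun i => Finset.mem_range.mpr ?_
          have : κ i ≤ ∑ j, κ j :=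
            Finset.single_le_sum (fun j _ => Nat.zero_le _) (Finset.mem_univ i)
          omega
        calc (Finset.Nat.antidiagonalTuple N k).card
            ≤ (Fintype.piFinset fun _ : Fin N => Finset.range (k + 1)).card :=
              Finset.card_le_card hsub
          _ = (k + 1) ^ N := by
              rw [Fintype.card_piFinset]
              simp
      calc s k ≤ (Finset.Nat.antidiagonalTuple N k).card • (Mt * b ^ k) :=
            Finset.sum_le_card_nsmul _ _ _ hterm
        _ = ((Finset.Nat.antidiagonalTuple N k).card : ℝ) * (Mt * b ^ k) := by
            rw [nsmul_eq_mul]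
        _ ≤ ((k : ℝ) + 1) ^ N * (Mt * b ^ k) := by
            refine mul_le_mul_of_nonneg_right ?_
              (mul_nonneg (le_trans zero_le_one hMt1) (pow_nonneg hb0.le k))
            calc ((Finset.Nat.antidiagonalTuple N k).card : ℝ)
                ≤ (((k + 1) ^ N : ℕ) : ℝ) := by exact_mod_cast hcard
              _ = ((k : ℝ) + 1) ^ N := by push_cast; ring
        _ = ((k : ℝ) + 1) ^ N * Mt * b ^ k := by ring
    -- polynomial beaten by geometric r/b
    have hrb : 1 < r / b := (one_lt_div hb0).mpr hbr
    have t1 : Tendsto (fun n : ℕ => (n : ℝ) ^ N / (r / b) ^ n) atTop (nhds 0) :=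
      tendsto_pow_const_div_const_pow_of_one_lt N hrb
    have t2 : Tendsto (fun n : ℕ => (((n + 1 : ℕ)) : ℝ) ^ N / (r / b) ^ (n + 1)) atTop (nhds 0) :=
      t1.comp (tendsto_add_atTop_nat 1)
    have t3 : Tendsto (fun k : ℕ => ((k : ℝ) + 1) ^ N * Mt / (r / b) ^ k) atTop (nhds 0) := by
      have := t2.const_mul (Mt * (r / b))
      rw [mul_zero] at this
      refine this.congr fun k => ?_
      have hrbne : (r / b) ≠ 0 := ne_of_gt (lt_trans one_pos hrb)
      have hpowne : (r / b) ^ k ≠ 0 := pow_ne_zero k hrbne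
      push_cast
      field_simp
      rw [pow_succ, mul_comm b, mul_assoc, div_mul_cancel₀ r (ne_of_gt hb0), mul_comm]
    have hev : ∀ᶠ k : ℕ in atTop, ((k : ℝ) + 1) ^ N * Mt / (r / b) ^ k ≤ 1 :=
      t3.eventually (eventually_le_nhds one_pos)
    filter_upwards [hev, eventually_ge_atTop 1] with k hk hk1
    have hrbk : (0 : ℝ) < (r / b) ^ k := pow_pos (lt_trans one_pos hrb) k
    have h4 : ((k : ℝ) + 1) ^ N * Mt ≤ (r / b) ^ k := (div_le_one hrbk).mp hk
    have h5 : s k ≤ r ^ k := by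
      calc s k ≤ ((k : ℝ) + 1) ^ N * Mt * b ^ k := hsb k
        _ ≤ (r / b) ^ k * b ^ k := mul_le_mul_of_nonneg_right h4 (pow_nonneg hb0.le k)
        _ = r ^ k := by rw [← mul_pow, div_mul_cancel₀ _ (ne_of_gt hb0)]
    calc s k ^ (1 / (k : ℝ)) ≤ (r ^ k) ^ (1 / (k : ℝ)) :=
          Real.rpow_le_rpow (hs0 k) h5 (by positivity)
      _ = r := root_pow_aux hr0.le (by omega)
  -- boundedness of the roots of s
  have hsbd : IsBoundedUnder (· ≤ ·) atTop (fun k : ℕ => s k ^ (1 / (k : ℝ))) :=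
    ⟨C + 1, by simpa [eventually_map] using key (C + 1) (lt_add_one C)⟩
  have hscobdd : IsCoboundedUnder (· ≤ ·) atTop (fun k : ℕ => s k ^ (1 / (k : ℝ))) :=
    isCoboundedUnder_le_of_le atTop fun k => Real.rpow_nonneg (hs0 k) _
  refine le_antisymm ?_ ?_
  · -- limsup s ≤ C
    refine le_of_forall_gt_imp_ge_of_dense fun r hr => ?_
    exact limsup_le_of_le hscobdd (key r hr)
  · -- C ≤ limsup s
    refine ciSup_le fun i => ?_
    refine limsup_le_limsup (Eventually.of_forall fun k => ?_)
      (isCoboundedUnder_le_of_le atTop fun k => Real.rpow_nonneg (ha i k) _) hsbd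
    exact Real.rpow_le_rpow (ha i k) (hais i k) (by positivity)
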